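/- Let cost : ℕ → ℤ^r and b ∈ ℕ^r, and suppose all prefix sums Σ_{j=0}^{i} cost(j) are ≤ b component-wise. If there exist indices j < k such that Σ_{l=j}^{k−1} cost(l) ≤ 0 component-wise (the loop consumes no net resources), then the infinite sequence obtained by repeating the segment [j,k) forever after position j (i.e., cost'(i) = cost(j + ((i−j) mod (k−j))) for i ≥ j, cost'(i) = cost(i) for i < j) also has all prefix sums ≤ b. -/

import Mathlib

theorem loop_repetition (r : ℕ) (cost : ℕ → (Fin r → ℤ)) (b : Fin r → ℕ)
    (hpref : ∀ i : ℕ, (∑ j ∈ Finset.range (i + 1), cost j) ≤ fun m => (b m : ℤ))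
    (j k : ℕ) (hjk : j < k)
    (hloop : (∑ l ∈ Finset.Ico j k, cost l) ≤ 0) :
    ∀ i : ℕ,
      (∑ i' ∈ Finset.range (i + 1),
          (fun m => if m < j then cost m else cost (j + ((m - j) % (k - j)))) i')
        ≤ fun m => (b m : ℤ) := by
  intro i
  set d := k - j with hdef
  have hd0 : 0 < d := Nat.sub_pos_of_lt hjk
  set cost' : ℕ → Fin r → ℤ :=
    fun m => if m < j then cost m else cost (j + ((m - j) % d)) with hc'
  -- S(k-1) + cost j ≤ S j
  have hwrap : (∑ m ∈ Finset.range k, cost m) + cost j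
      ≤ ∑ m ∈ Finset.range (j + 1), cost m := by
    have hsplit : (∑ m ∈ Finset.range (j+1), cost m) + ∑ m ∈ Finset.Ico (j+1) k, cost m
        = ∑ m ∈ Finset.range k, cost m := by
      rw [Finset.range_eq_Ico, Finset.range_eq_Ico]
      exact Finset.sum_Ico_consecutive cost (m := 0) (n := j+1) (k := k) (by omega) (by omega)
    have hbot : (∑ l ∈ Finset.Ico j k, cost l)
        = cost j + ∑ l ∈ Finset.Ico (j+1) k, cost l :=
      Finset.sum_eq_sum_Ico_succ_bot hjk _
    have : cost j + ∑ l ∈ Finset.Ico (j+1) k, cost l ≤ 0 := hbot ▸ hloop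
    calc (∑ m ∈ Finset.range k, cost m) + cost j
        = (∑ m ∈ Finset.range (j+1), cost m)
          + (cost j + ∑ l ∈ Finset.Ico (j+1) k, cost l) := by
          rw [← hsplit]; ring
      _ ≤ (∑ m ∈ Finset.range (j+1), cost m) + 0 := by
          exact add_le_add_right this _
      _ = ∑ m ∈ Finset.range (j + 1), cost m := add_zero _
  have key : ∀ i, j ≤ i → (∑ m ∈ Finset.range (i+1), cost' m)
      ≤ ∑ m ∈ Finset.range (j + (i - j) % d + 1), cost m := by
    intro i hi
    induction i, hi using Nat.le_induction with
    | base =>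
      have : ∀ m ∈ Finset.range (j+1), cost' m = cost m := by
        intro m hm
        simp only [Finset.mem_range] at hm
        by_cases h : m < j
        · simp [hc', h]
        · have hmj : m = j := by omega
          simp [hc', hmj, Nat.mod_eq_of_lt hd0]
      rw [Finset.sum_congr rfl this]
      simp
    | succ i hi ih =>
      set s := (i - j) % d with hs
      have hslt : s < d := Nat.mod_lt _ hd0
      have hq0 := (Nat.div_add_mod (i - j) d).symm
      rw [← hs] at hq0
      set q := (i - j) / d with hqdef
      have hq : i - j = d * q + s := hq0
      have hstep : ∑ m ∈ Finset.range (i+1+1), cost' m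
          = (∑ m ∈ Finset.range (i+1), cost' m) + cost' (i+1) :=
        Finset.sum_range_succ _ _
      have hij1 : i + 1 - j = d * q + (s + 1) := by omega
      by_cases hcase : s + 1 = d
      · -- wrap around
        have hm0 : (i + 1 - j) % d = 0 := by
          rw [hij1, hcase, ← Nat.mul_succ]
          exact Nat.mul_mod_right _ _
        have hc1 : cost' (i+1) = cost j := by
          simp [hc', Nat.not_lt.mpr (by omega : j ≤ i + 1), hm0]
        have htarget : j + s + 1 = k := by omega
        rw [hstep, hc1, hm0]
        calc (∑ m ∈ Finset.range (i+1), cost' m) + cost j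
            ≤ (∑ m ∈ Finset.range (j + s + 1), cost m) + cost j :=
              add_le_add_left ih _
          _ = (∑ m ∈ Finset.range k, cost m) + cost j := by rw [htarget]
          _ ≤ ∑ m ∈ Finset.range (j + 1), cost m := hwrap
          _ = ∑ m ∈ Finset.range (j + 0 + 1), cost m := by norm_num
      · -- no wrap
        have hm1 : (i + 1 - j) % d = s + 1 := by
          rw [hij1, Nat.mul_add_mod]
          exact Nat.mod_eq_of_lt (by omega)
        have hc1 : cost' (i+1) = cost (j + (s + 1)) := by
          simp [hc', Nat.not_lt.mpr (by omega : j ≤ i + 1), hm1]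
        rw [hstep, hc1, hm1]
        have : ∑ m ∈ Finset.range (j + (s+1) + 1), cost m
            = (∑ m ∈ Finset.range (j + s + 1), cost m) + cost (j + (s+1)) := by
          have : j + (s+1) + 1 = (j + s + 1) + 1 := by omega
          rw [this, Finset.sum_range_succ, Nat.add_assoc]
        rw [this]
        exact add_le_add_left ih _
  show (∑ m ∈ Finset.range (i+1), cost' m) ≤ fun m => (b m : ℤ)
  by_cases hi : i < j
  · have : ∀ m ∈ Finset.range (i+1), cost' m = cost m := by
      intro m hm
      simp only [Finset.mem_range] at hm
      simp [hc', show m < j by omega]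
    rw [Finset.sum_congr rfl this]
    exact hpref i
  · exact le_trans (key i (by omega)) (hpref _)
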